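/- Let k, m be natural numbers with m ≤ 2k. Let W_{B,inp} ∈ ℂ^{m×4k}, W_{B,0} ∈ ℂ^{(2k−m)×4k}, let W_B ∈ ℂ^{2k×4k} be the vertical stack [W_{B,inp}; W_{B,0}], and let W_C ∈ ℂ^{2k×4k}. Let Σ ∈ ℂ^{4k×4k} be the block swap matrix [[0, I_{2k}], [I_{2k}, 0]], and set W_{C,out} := [I_m, 0_{m×(2k−m)}] W_C ∈ ℂ^{m×4k}. Assume the co-location condition: the Hermitian matrix Σ − [W_B; W_C]* Σ [W_B; W_C] is negative semidefinite, where [W_B; W_C] ∈ ℂ^{4k×4k} is the vertical stack of W_B and W_C. Then for every b₁, b₂ ∈ ℂ^{2k} and u ∈ ℂ^m such that, with b := (b₁, b₂) ∈ ℂ^{4k}, one has W_{B,inp} b = u and W_{B,0} b = 0, the identity Re⟨b₁, b₂⟩ − Re⟨u, W_{C,out} b⟩ = ½ b*(Σ − [W_B; W_C]* Σ [W_B; W_C]) b holds; in particular Re⟨b₁, b₂⟩ ≤ Re⟨u, W_{C,out} b⟩. -/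

import Mathlib

open Matrix
open scoped ComplexOrder

/-- Vertical stack `[A; B]` of an `m × n` and a `(2k − m) × n` matrix (with `m ≤ 2k`),
viewed as a `2k × n` matrix: the first `m` rows come from `A`, the remaining ones from `B`. -/
def vstack {n : Type*} {k m : ℕ} (A : Matrix (Fin m) n ℂ)
    (B : Matrix (Fin (2 * k - m)) n ℂ) : Matrix (Fin (2 * k)) n ℂ :=
  Matrix.of fun i j =>
    if h : (i : ℕ) < m then A ⟨i, h⟩ j
    else B ⟨(i : ℕ) - m, by have := i.isLt; omega⟩ j

/-- The selector matrix `[I_m, 0_{m × (2k − m)}] ∈ ℂ^{m × 2k}`. -/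
def selector (k m : ℕ) : Matrix (Fin m) (Fin (2 * k)) ℂ :=
  Matrix.of fun i j => if (j : ℕ) = (i : ℕ) then 1 else 0

theorem colocated_energy_identity (k m : ℕ) (hm : m ≤ 2 * k)
    (WBinp : Matrix (Fin m) (Fin (2 * k) ⊕ Fin (2 * k)) ℂ)
    (WB0 : Matrix (Fin (2 * k - m)) (Fin (2 * k) ⊕ Fin (2 * k)) ℂ)
    (WC : Matrix (Fin (2 * k)) (Fin (2 * k) ⊕ Fin (2 * k)) ℂ)
    -- the block swap matrix `Σ = [[0, I],[I, 0]]`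
    (hneg : (-(Matrix.fromBlocks (0 : Matrix (Fin (2 * k)) (Fin (2 * k)) ℂ) 1 1 0 -
        (Matrix.fromRows (vstack WBinp WB0) WC)ᴴ *
          Matrix.fromBlocks (0 : Matrix (Fin (2 * k)) (Fin (2 * k)) ℂ) 1 1 0 *
          Matrix.fromRows (vstack WBinp WB0) WC)).PosSemidef) :
    ∀ (b₁ b₂ : Fin (2 * k) → ℂ) (u : Fin m → ℂ),
      WBinp.mulVec (Sum.elim b₁ b₂) = u →
      WB0.mulVec (Sum.elim b₁ b₂) = 0 →
      (star b₁ ⬝ᵥ b₂).re - (star u ⬝ᵥ (selector k m * WC).mulVec (Sum.elim b₁ b₂)).re =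
          (1 / 2 : ℝ) *
            (star (Sum.elim b₁ b₂) ⬝ᵥ
              (Matrix.fromBlocks (0 : Matrix (Fin (2 * k)) (Fin (2 * k)) ℂ) 1 1 0 -
                  (Matrix.fromRows (vstack WBinp WB0) WC)ᴴ *
                    Matrix.fromBlocks (0 : Matrix (Fin (2 * k)) (Fin (2 * k)) ℂ) 1 1 0 *
                    Matrix.fromRows (vstack WBinp WB0) WC).mulVec
                (Sum.elim b₁ b₂)).re ∧
        (star b₁ ⬝ᵥ b₂).re ≤ (star u ⬝ᵥ (selector k m * WC).mulVec (Sum.elim b₁ b₂)).re := by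
  intro b₁ b₂ u hu h0
  set b : Fin (2 * k) ⊕ Fin (2 * k) → ℂ := Sum.elim b₁ b₂ with hb
  set S : Matrix (Fin (2 * k) ⊕ Fin (2 * k)) (Fin (2 * k) ⊕ Fin (2 * k)) ℂ :=
    Matrix.fromBlocks 0 1 1 0 with hS
  set W := Matrix.fromRows (vstack WBinp WB0) WC with hW
  -- value of W_B b
  have hvB : (vstack WBinp WB0).mulVec b =
      fun i : Fin (2 * k) => if h : (i : ℕ) < m then u ⟨(i : ℕ), h⟩ else 0 := by
    funext i
    by_cases h : (i : ℕ) < m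
    · have := congrFun hu ⟨(i : ℕ), h⟩
      simp only [Matrix.mulVec, dotProduct, vstack, Matrix.of_apply, dif_pos h] at *
      simpa using this
    · have := congrFun h0 ⟨(i : ℕ) - m, by have := i.isLt; omega⟩
      simp only [Matrix.mulVec, dotProduct, vstack, Matrix.of_apply, dif_neg h,
        Pi.zero_apply] at *
      simpa using this
  -- W b
  have hWb : W.mulVec b = Sum.elim ((vstack WBinp WB0).mulVec b) (WC.mulVec b) :=
    Matrix.fromRows_mulVec _ _ _
  -- selector picks entries
  have hsel : (selector k m * WC).mulVec b =
      fun j : Fin m => WC.mulVec b ⟨(j : ℕ), lt_of_lt_of_le j.isLt hm⟩ := by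
    funext j
    rw [← Matrix.mulVec_mulVec]
    have hij : ∀ i : Fin (2 * k),
        ((i : ℕ) = (j : ℕ)) ↔ i = ⟨(j : ℕ), lt_of_lt_of_le j.isLt hm⟩ := by
      intro i; simp [Fin.ext_iff]
    simp only [Matrix.mulVec, dotProduct, selector, Matrix.of_apply, hij,
      ite_mul, one_mul, zero_mul]
    rw [Finset.sum_ite_eq' Finset.univ]
    simp
  -- cross term
  have hcross : star ((vstack WBinp WB0).mulVec b) ⬝ᵥ WC.mulVec b =
      star u ⬝ᵥ (selector k m * WC).mulVec b := by
    rw [hvB, hsel]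
    simp only [dotProduct, Pi.star_apply]
    have hmap : ∑ j : Fin m, star (u j) *
          (WC.mulVec b) ⟨(j : ℕ), lt_of_lt_of_le j.isLt hm⟩ =
        ∑ i ∈ Finset.univ.map (Fin.castLEEmb hm),
          star (if h : (i : ℕ) < m then u ⟨(i : ℕ), h⟩ else 0) * (WC.mulVec b) i := by
      rw [Finset.sum_map]
      refine Finset.sum_congr rfl fun j _ => ?_
      have hj : ((Fin.castLEEmb hm j : Fin (2 * k)) : ℕ) < m := by
        simp [Fin.castLEEmb]
      rw [dif_pos hj]
      have h2 : (⟨((Fin.castLEEmb hm j : Fin (2 * k)) : ℕ), hj⟩ : Fin m) = j :=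
        Fin.ext rfl
      rw [h2]
      rfl
    rw [hmap]
    refine (Finset.sum_subset (Finset.subset_univ _) ?_).symm
    intro i _ hi
    have hni : ¬ (i : ℕ) < m := by
      intro h
      exact hi (Finset.mem_map.2 ⟨⟨(i : ℕ), h⟩, Finset.mem_univ _, by
        simp [Fin.castLEEmb, Fin.ext_iff]⟩)
    simp [hni]
  -- star of Sum.elim
  have hstar : star b = Sum.elim (star b₁) (star b₂) := by
    funext i; cases i <;> rfl
  -- S b = swap
  have hSmul : ∀ x y : Fin (2 * k) → ℂ, S.mulVec (Sum.elim x y) = Sum.elim y x := by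
    intro x y
    rw [hS, Matrix.fromBlocks_mulVec]
    simp
  -- quadratic form of S
  have hq1 : star b ⬝ᵥ S.mulVec b = star b₁ ⬝ᵥ b₂ + star b₂ ⬝ᵥ b₁ := by
    rw [hb, hSmul, hstar, sumElim_dotProduct_sumElim]
  -- quadratic form of WᴴSW
  have hq2 : star b ⬝ᵥ (Wᴴ * S * W).mulVec b =
      star ((vstack WBinp WB0).mulVec b) ⬝ᵥ WC.mulVec b +
        star (WC.mulVec b) ⬝ᵥ (vstack WBinp WB0).mulVec b := by
    rw [← Matrix.mulVec_mulVec, ← Matrix.mulVec_mulVec, Matrix.dotProduct_mulVec,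
      ← Matrix.star_mulVec, hWb, hSmul]
    have : star (Sum.elim ((vstack WBinp WB0).mulVec b) (WC.mulVec b)) =
        Sum.elim (star ((vstack WBinp WB0).mulVec b)) (star (WC.mulVec b)) := by
      funext i; cases i <;> rfl
    rw [this, sumElim_dotProduct_sumElim]
  -- conjugate symmetry
  have hconj : ∀ (v w : Fin (2 * k) → ℂ), star w ⬝ᵥ v = starRingEnd ℂ (star v ⬝ᵥ w) := by
    intro v w
    simp only [dotProduct, map_sum, Pi.star_apply]
    exact Finset.sum_congr rfl fun i _ => by
      rw [starRingEnd_apply, StarMul.star_mul, star_star]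
  have hQ : (star b ⬝ᵥ (S - Wᴴ * S * W).mulVec b).re =
      2 * (star b₁ ⬝ᵥ b₂).re - 2 * (star u ⬝ᵥ (selector k m * WC).mulVec b).re := by
    rw [Matrix.sub_mulVec, dotProduct_sub, hq1, hq2, hcross]
    rw [hconj b₂ b₁, ← hcross, hconj ((vstack WBinp WB0).mulVec b) (WC.mulVec b), hcross]
    simp only [Complex.sub_re, Complex.add_re, Complex.conj_re]
    ring
  have hident : (star b₁ ⬝ᵥ b₂).re - (star u ⬝ᵥ (selector k m * WC).mulVec b).re =
      (1 / 2 : ℝ) * (star b ⬝ᵥ (S - Wᴴ * S * W).mulVec b).re := by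
    rw [hQ]; ring
  refine ⟨hident, ?_⟩
  have hle := hneg.dotProduct_mulVec_nonneg b
  rw [Complex.nonneg_iff] at hle
  have : (star b ⬝ᵥ (-(S - Wᴴ * S * W)).mulVec b).re =
      -(star b ⬝ᵥ (S - Wᴴ * S * W).mulVec b).re := by
    rw [Matrix.neg_mulVec, dotProduct_neg, Complex.neg_re]
  rw [this] at hle
  have h2 : (star b ⬝ᵥ (S - Wᴴ * S * W).mulVec b).re ≤ 0 := by linarith [hle.1]
  have := hident
  nlinarith [this, h2]
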